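/- Let M be a Noetherian (t−1)-invertible t-unipotent Λ-module of unipotence index k. Then for every n ≥ 1 the derived Alexander modules satisfy A_n(M) ≅ A_{n+k}(M) as Λ-modules, and if n and k are coprime then A_n(M) = 0. -/

import Mathlib

open Polynomial

/-- `Λ` is the ring `ℤ[t,t⁻¹]` of Laurent polynomials with integer coefficients. -/
abbrev Λ : Type := LaurentPolynomial ℤ

/-- `tL` is the element `t` of `Λ = ℤ[t,t⁻¹]`. -/
noncomputable def tL : Λ := LaurentPolynomial.T 1

/-- The submodule `(t^n − 1)M` of a `Λ`-module `M`. -/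
noncomputable def derivedSub (M : Type) [AddCommGroup M] [Module Λ M] (n : ℕ) :
    Submodule Λ M :=
  LinearMap.range ((tL ^ n - 1) • (LinearMap.id : M →ₗ[Λ] M))

/-- The `n`-th derived Alexander module `A_n(M) = M/(t^n − 1)M` of a `Λ`-module `M`. -/
noncomputable abbrev derivedAlexander (M : Type) [AddCommGroup M] [Module Λ M] (n : ℕ) :=
  M ⧸ derivedSub M n

lemma mem_derivedSub {M : Type} [AddCommGroup M] [Module Λ M] (n : ℕ) (v : M) :
    v ∈ derivedSub M n ↔ ∃ w : M, (tL ^ n - 1) • w = v := by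
  simp [derivedSub, LinearMap.mem_range]

lemma tL_pow (n : ℕ) : tL ^ n = LaurentPolynomial.T (n : ℤ) := by
  rw [tL, LaurentPolynomial.T_pow, mul_one]

lemma T_smul_cancel {N : Type} [AddCommGroup N] [Module Λ N] (a : ℤ) (x y : N)
    (h : (LaurentPolynomial.T a : Λ) • x = (LaurentPolynomial.T a : Λ) • y) : x = y := by
  have h2 := congrArg (fun z => (LaurentPolynomial.T (-a) : Λ) • z) h
  simp only [smul_smul, ← LaurentPolynomial.T_add] at h2
  rwa [neg_add_cancel, LaurentPolynomial.T_zero, one_smul, one_smul] at h2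

/-- If `M` is a Noetherian (t−1)-invertible t-unipotent Λ-module of unipotence index `k`,
then `A_n(M) ≅ A_{n+k}(M)` for all `n ≥ 1`, and `A_n(M) = 0` whenever `n` is coprime
to `k`. -/
theorem derived_alexander_periodic (M : Type) [AddCommGroup M] [Module Λ M]
    [IsNoetherian Λ M]
    (hM : Function.Bijective (fun v : M => (tL - 1) • v))
    (k : ℕ) (hk : 1 ≤ k)
    (hku : ∀ v : M, (tL ^ k - 1) • v = 0)
    (hmin : ∀ j : ℕ, 1 ≤ j → (∀ v : M, (tL ^ j - 1) • v = 0) → k ≤ j)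
    (n : ℕ) (hn : 1 ≤ n) :
    Nonempty (derivedAlexander M n ≃ₗ[Λ] derivedAlexander M (n + k)) ∧
      (Nat.Coprime n k → ∀ x : derivedAlexander M n, x = 0) := by
  -- key pointwise identity
  have key : ∀ v : M, (tL ^ (n + k) - 1) • v = (tL ^ n - 1) • v := by
    intro v
    have h : tL ^ (n + k) - 1 = tL ^ n * (tL ^ k - 1) + (tL ^ n - 1) := by ring
    rw [h, add_smul, mul_smul, hku v, smul_zero, zero_add]
  have hsub : derivedSub M n = derivedSub M (n + k) := by
    ext v
    rw [mem_derivedSub, mem_derivedSub]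
    constructor
    · rintro ⟨w, rfl⟩; exact ⟨w, key w⟩
    · rintro ⟨w, rfl⟩; exact ⟨w, (key w).symm⟩
  refine ⟨⟨Submodule.quotEquivOfEq _ _ hsub⟩, ?_⟩
  intro hcop x
  -- on the quotient, t^n and t^k act as identity
  have hnq : ∀ y : derivedAlexander M n, (tL ^ n) • y = y := by
    intro y
    obtain ⟨v, rfl⟩ := Submodule.Quotient.mk_surjective _ y
    have : Submodule.Quotient.mk ((tL ^ n - 1) • v) = (0 : derivedAlexander M n) := by
      rw [Submodule.Quotient.mk_eq_zero, mem_derivedSub]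
      exact ⟨v, rfl⟩
    have h2 : (tL ^ n - 1) • (Submodule.Quotient.mk v : derivedAlexander M n) = 0 := by
      rw [← Submodule.Quotient.mk_smul]; exact this
    rw [sub_smul, one_smul, sub_eq_zero] at h2
    exact h2
  have hkq : ∀ y : derivedAlexander M n, (tL ^ k) • y = y := by
    intro y
    obtain ⟨v, rfl⟩ := Submodule.Quotient.mk_surjective _ y
    have h2 : (tL ^ k - 1) • (Submodule.Quotient.mk v : derivedAlexander M n) = 0 := by
      rw [← Submodule.Quotient.mk_smul, hku v, Submodule.Quotient.mk_zero]
    rw [sub_smul, one_smul, sub_eq_zero] at h2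
    exact h2
  -- hence T (m * n) and T (m * k) act as identity for all integers m
  have hTn : ∀ (d : ℕ), (∀ y : derivedAlexander M n, (tL ^ d) • y = y) →
      ∀ (m : ℤ) (y : derivedAlexander M n),
        (LaurentPolynomial.T (m * d) : Λ) • y = y := by
    intro d hd m
    induction m using Int.induction_on with
    | zero => intro y; simp [LaurentPolynomial.T_zero]
    | succ i ih =>
        intro y
        have : ((i : ℤ) + 1) * d = i * d + d := by ring
        rw [this, LaurentPolynomial.T_add, mul_smul, ← tL_pow, hd, ih]
    | pred i ih =>
        intro y
        apply T_smul_cancel (d : ℤ)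
        have h1 : (LaurentPolynomial.T (d : ℤ) : Λ) • (LaurentPolynomial.T ((-(i : ℤ) - 1) * d) : Λ) • y
            = (LaurentPolynomial.T ((-(i : ℤ)) * d) : Λ) • y := by
          rw [smul_smul, ← LaurentPolynomial.T_add]
          congr 2
          ring
        rw [h1, ih y, ← tL_pow, hd]
  -- Bezout: t acts as identity on the quotient
  obtain ⟨a, b, hab⟩ : IsCoprime (n : ℤ) (k : ℤ) := Int.isCoprime_iff_gcd_eq_one.2 hcop
  have htq : ∀ y : derivedAlexander M n, tL • y = y := by
    intro y
    have : tL • y = (LaurentPolynomial.T (a * n + b * k) : Λ) • y := by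
      rw [hab]; rfl
    rw [this, LaurentPolynomial.T_add, mul_smul, hTn k hkq b, hTn n hnq a]
  -- (t-1) acts as 0 on the quotient, but is also surjective on the quotient
  obtain ⟨v, rfl⟩ := Submodule.Quotient.mk_surjective _ x
  obtain ⟨w, hw⟩ := hM.2 v
  have hw' : (tL - 1) • w = v := hw
  have : (Submodule.Quotient.mk v : derivedAlexander M n)
      = (tL - 1) • (Submodule.Quotient.mk w : derivedAlexander M n) := by
    rw [← Submodule.Quotient.mk_smul, hw']
  rw [this, sub_smul, one_smul, htq, sub_self]
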